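/- If a symmetric positive definite 4×4 matrix ζ satisfies ĥ·I ≤ ζ⁻¹ ≤ č·I with 0 < ĥ ≤ č, and ζ' := A₂ζA₂ᵀ + B₂QB₂ᵀ with λ_max(A₂A₂ᵀ) = ā, λ_max(B₂B₂ᵀ) = b̄, and Q ≤ q̌·I, then (ζ')⁻¹ ≥ (ā/ĥ + b̄q̌)⁻¹·I. -/

import Mathlib

set_option maxRecDepth 8000

open Matrix

namespace Stmt8Aux

variable {n : Type*} [Fintype n] [DecidableEq n]

lemma psd_smul {M : Matrix n n ℝ} (hM : M.PosSemidef) {c : ℝ} (hc : 0 ≤ c) :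
    (c • M).PosSemidef := by
  refine .of_dotProduct_mulVec_nonneg (by rw [IsHermitian, conjTranspose_smul, star_trivial, hM.1.eq]) fun x => ?_
  rw [smul_mulVec, dotProduct_smul, smul_eq_mul]
  exact mul_nonneg hc (hM.dotProduct_mulVec_nonneg x)

lemma smul_one_sub_psd {M : Matrix n n ℝ} (hM : M.IsHermitian) {c : ℝ}
    (hc : ∀ i, hM.eigenvalues i ≤ c) :
    (c • (1 : Matrix n n ℝ) - M).PosSemidef := by
  have hU : (hM.eigenvectorUnitary : Matrix n n ℝ) * star (hM.eigenvectorUnitary : Matrix n n ℝ) = 1 :=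
    (Matrix.mem_unitaryGroup_iff).mp hM.eigenvectorUnitary.2
  have hdiag : diagonal (fun i => c - hM.eigenvalues i)
      = c • (1 : Matrix n n ℝ) - diagonal (RCLike.ofReal ∘ hM.eigenvalues) := by
    rw [smul_one_eq_diagonal, diagonal_sub]
    congr 1
  have key : c • (1 : Matrix n n ℝ) - M
      = (hM.eigenvectorUnitary : Matrix n n ℝ) * (diagonal (fun i => c - hM.eigenvalues i))
        * star (hM.eigenvectorUnitary : Matrix n n ℝ) := by
    rw [hdiag, Matrix.mul_sub, Matrix.sub_mul, mul_smul_comm, smul_mul_assoc, mul_one, hU]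
    exact congrArg (fun X => c • (1 : Matrix n n ℝ) - X) hM.spectral_theorem
  rw [key, Matrix.star_eq_conjTranspose]
  exact (PosSemidef.diagonal (fun i => sub_nonneg.2 (hc i))).mul_mul_conjTranspose_same _

open scoped MatrixOrder Matrix.Norms.L2Operator in
lemma inv_ge_of_le {M : Matrix n n ℝ} (hM : M.PosDef) {c : ℝ} (hc : 0 < c)
    (h : (c • (1 : Matrix n n ℝ) - M).PosSemidef) :
    (M⁻¹ - c⁻¹ • (1 : Matrix n n ℝ)).PosSemidef := by
  have hps := hM.posSemidef
  set R := CFC.sqrt M with hRdef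
  have hRR : R * R = M := CFC.sqrt_mul_sqrt_self M hps.nonneg
  have hdet : IsUnit R.det := by
    have h2 : R.det * R.det = M.det := by rw [← det_mul, hRR]
    refine isUnit_iff_ne_zero.2 fun h0 => ?_
    rw [h0, mul_zero] at h2
    exact (hM.det_pos).ne' h2.symm
  have hRi : R⁻¹ * R = 1 := nonsing_inv_mul R hdet
  have hRi' : R * R⁻¹ = 1 := mul_nonsing_inv R hdet
  have hMinv : M⁻¹ = R⁻¹ * R⁻¹ := by rw [← hRR, Matrix.mul_inv_rev]
  have hRh : (R⁻¹)ᴴ = R⁻¹ := ((CFC.sqrt_nonneg M).posSemidef.1.inv).eq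
  have hmid : R⁻¹ * M * R⁻¹ = 1 := by
    rw [← hRR, ← mul_assoc, hRi, one_mul, hRi']
  have key : M⁻¹ - c⁻¹ • (1 : Matrix n n ℝ)
      = c⁻¹ • (R⁻¹ * (c • (1 : Matrix n n ℝ) - M) * (R⁻¹)ᴴ) := by
    rw [hRh, Matrix.mul_sub, Matrix.sub_mul, mul_smul_comm, smul_mul_assoc, mul_one,
      ← hMinv, hmid, smul_sub, smul_smul, inv_mul_cancel₀ hc.ne', one_smul]
  rw [key]
  exact psd_smul (h.mul_mul_conjTranspose_same R⁻¹) (inv_nonneg.2 hc.le)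

open scoped MatrixOrder Matrix.Norms.L2Operator in
lemma inv_le_of_ge {M : Matrix n n ℝ} (hM : M.PosDef) {c : ℝ} (hc : 0 < c)
    (h : (M - c • (1 : Matrix n n ℝ)).PosSemidef) :
    (c⁻¹ • (1 : Matrix n n ℝ) - M⁻¹).PosSemidef := by
  have hps := hM.posSemidef
  set R := CFC.sqrt M with hRdef
  have hRR : R * R = M := CFC.sqrt_mul_sqrt_self M hps.nonneg
  have hdet : IsUnit R.det := by
    have h2 : R.det * R.det = M.det := by rw [← det_mul, hRR]
    refine isUnit_iff_ne_zero.2 fun h0 => ?_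
    rw [h0, mul_zero] at h2
    exact (hM.det_pos).ne' h2.symm
  have hRi : R⁻¹ * R = 1 := nonsing_inv_mul R hdet
  have hRi' : R * R⁻¹ = 1 := mul_nonsing_inv R hdet
  have hMinv : M⁻¹ = R⁻¹ * R⁻¹ := by rw [← hRR, Matrix.mul_inv_rev]
  have hRh : (R⁻¹)ᴴ = R⁻¹ := ((CFC.sqrt_nonneg M).posSemidef.1.inv).eq
  have hmid : R⁻¹ * M * R⁻¹ = 1 := by
    rw [← hRR, ← mul_assoc, hRi, one_mul, hRi']
  have key : c⁻¹ • (1 : Matrix n n ℝ) - M⁻¹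
      = c⁻¹ • (R⁻¹ * (M - c • (1 : Matrix n n ℝ)) * (R⁻¹)ᴴ) := by
    rw [hRh, Matrix.mul_sub, Matrix.sub_mul, mul_smul_comm, smul_mul_assoc, mul_one,
      ← hMinv, hmid, smul_sub, smul_smul, inv_mul_cancel₀ hc.ne', one_smul]
  rw [key]
  exact psd_smul (h.mul_mul_conjTranspose_same R⁻¹) (inv_nonneg.2 hc.le)

lemma posDef_mul_mul {A : Matrix n n ℝ} (hA : IsUnit A) {N : Matrix n n ℝ}
    (hN : N.PosDef) : (A * N * Aᴴ).PosDef := by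
  have hdet : IsUnit Aᴴ.det := by
    rw [det_conjTranspose]
    exact (isUnit_iff_isUnit_det A).mp hA |>.star
  refine .of_dotProduct_mulVec_pos (isHermitian_mul_mul_conjTranspose A hN.1) fun x hx => ?_
  have hx' : Aᴴ *ᵥ x ≠ 0 := by
    intro h0
    apply hx
    have himp : (Aᴴ)⁻¹ *ᵥ (Aᴴ *ᵥ x) = x := by
      rw [mulVec_mulVec, nonsing_inv_mul _ hdet, one_mulVec]
    rw [← himp, h0, mulVec_zero]
  have := hN.dotProduct_mulVec_pos hx'
  have hrw : A * N * Aᴴ = (Aᴴ)ᴴ * N * Aᴴ := by rw [conjTranspose_conjTranspose]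
  rw [hrw]
  simpa only [star_mulVec, dotProduct_mulVec, vecMul_vecMul] using this

end Stmt8Aux

open Stmt8Aux

theorem stmt8 (A₂ : Matrix (Fin 4) (Fin 4) ℝ) (hA₂ : IsUnit A₂)
    (B₂ : Matrix (Fin 4) (Fin 2) ℝ)
    (Q : Matrix (Fin 2) (Fin 2) ℝ) (hQ : Q.PosDef) (hQsym : Q.IsHermitian)
    (qc : ℝ) (hQle : ((qc • (1 : Matrix (Fin 2) (Fin 2) ℝ)) - Q).PosSemidef)
    (abar bbar : ℝ)
    (habar : IsGreatest (spectrum ℝ (A₂ * A₂ᵀ)) abar)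
    (hbbar : IsGreatest (spectrum ℝ (B₂ * B₂ᵀ)) bbar)
    (ζ : Matrix (Fin 4) (Fin 4) ℝ) (hζ : ζ.PosDef)
    (hhat chk : ℝ) (hpos : 0 < hhat) (hhc : hhat ≤ chk)
    (hlo : (ζ⁻¹ - hhat • (1 : Matrix (Fin 4) (Fin 4) ℝ)).PosSemidef)
    (hhi : ((chk • (1 : Matrix (Fin 4) (Fin 4) ℝ)) - ζ⁻¹).PosSemidef) :
    ((A₂ * ζ * A₂ᵀ + B₂ * Q * B₂ᵀ)⁻¹
      - (abar / hhat + bbar * qc)⁻¹ • (1 : Matrix (Fin 4) (Fin 4) ℝ)).PosSemidef := by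
  have hAH : A₂ᴴ = A₂ᵀ := conjTranspose_eq_transpose_of_trivial A₂
  have hBH : B₂ᴴ = B₂ᵀ := conjTranspose_eq_transpose_of_trivial B₂
  have hζdet : IsUnit ζ.det := isUnit_iff_ne_zero.2 hζ.det_pos.ne'
  -- ζ ≤ hhat⁻¹ • 1
  have h1 : (hhat⁻¹ • (1 : Matrix (Fin 4) (Fin 4) ℝ) - ζ).PosSemidef := by
    have := inv_le_of_ge hζ.inv hpos hlo
    rwa [nonsing_inv_nonsing_inv ζ hζdet] at this
  -- hermitian facts
  have hAAT : (A₂ * A₂ᵀ).IsHermitian := by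
    rw [← hAH]; exact isHermitian_mul_conjTranspose_self A₂
  have hBBT : (B₂ * B₂ᵀ).IsHermitian := by
    rw [← hBH]; exact isHermitian_mul_conjTranspose_self B₂
  have hAle : ∀ i, hAAT.eigenvalues i ≤ abar :=
    fun i => habar.2 (hAAT.eigenvalues_mem_spectrum_real i)
  have hBle : ∀ i, hBBT.eigenvalues i ≤ bbar :=
    fun i => hbbar.2 (hBBT.eigenvalues_mem_spectrum_real i)
  have hA1 : (abar • (1 : Matrix (Fin 4) (Fin 4) ℝ) - A₂ * A₂ᵀ).PosSemidef :=
    smul_one_sub_psd hAAT hAle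
  have hB1 : (bbar • (1 : Matrix (Fin 4) (Fin 4) ℝ) - B₂ * B₂ᵀ).PosSemidef :=
    smul_one_sub_psd hBBT hBle
  -- positivity of scalars
  have hAAT_pd : (A₂ * A₂ᵀ).PosDef := by
    have := posDef_mul_mul hA₂ (Matrix.PosDef.one (n := Fin 4) (R := ℝ))
    rwa [mul_one, hAH] at this
  have habar_pos : 0 < abar := lt_of_lt_of_le (hAAT_pd.eigenvalues_pos 0) (hAle 0)
  have hBBT_psd : (B₂ * B₂ᵀ).PosSemidef := by
    rw [← hBH]; exact posSemidef_self_mul_conjTranspose B₂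
  have hbbar_nonneg : 0 ≤ bbar := le_trans (hBBT_psd.eigenvalues_nonneg 0) (hBle 0)
  have hqc_pos : 0 < qc := by
    have hq1 : (qc • (1 : Matrix (Fin 2) (Fin 2) ℝ)).PosDef := by
      have e : Q + (qc • (1 : Matrix (Fin 2) (Fin 2) ℝ) - Q) = qc • 1 := by abel
      have := hQ.add_posSemidef hQle
      rwa [e] at this
    have hx : (fun _ => (1 : ℝ)) ≠ (0 : Fin 2 → ℝ) := by
      intro h; exact one_ne_zero (congrFun h 0)
    have := hq1.dotProduct_mulVec_pos hx
    simpa [smul_mulVec, dotProduct_smul, dotProduct, Fin.sum_univ_two] using this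
  have hc_pos : 0 < abar / hhat + bbar * qc :=
    add_pos_of_pos_of_nonneg (div_pos habar_pos hpos)
      (mul_nonneg hbbar_nonneg hqc_pos.le)
  -- S is PosDef
  have hS1 : (A₂ * ζ * A₂ᵀ).PosDef := by
    have := posDef_mul_mul hA₂ hζ
    rwa [hAH] at this
  have hS2 : (B₂ * Q * B₂ᵀ).PosSemidef := by
    have := hQ.posSemidef.mul_mul_conjTranspose_same B₂
    rwa [hBH] at this
  have hS : (A₂ * ζ * A₂ᵀ + B₂ * Q * B₂ᵀ).PosDef := hS1.add_posSemidef hS2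
  -- upper bound on S
  have hP1 : (A₂ * (hhat⁻¹ • (1 : Matrix (Fin 4) (Fin 4) ℝ) - ζ) * A₂ᵀ).PosSemidef := by
    have := h1.mul_mul_conjTranspose_same A₂
    rwa [hAH] at this
  have hP2 : (B₂ * (qc • (1 : Matrix (Fin 2) (Fin 2) ℝ) - Q) * B₂ᵀ).PosSemidef := by
    have := hQle.mul_mul_conjTranspose_same B₂
    rwa [hBH] at this
  have key : (abar / hhat + bbar * qc) • (1 : Matrix (Fin 4) (Fin 4) ℝ)
        - (A₂ * ζ * A₂ᵀ + B₂ * Q * B₂ᵀ)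
      = (hhat⁻¹ • (abar • (1 : Matrix (Fin 4) (Fin 4) ℝ) - A₂ * A₂ᵀ)
          + A₂ * (hhat⁻¹ • (1 : Matrix (Fin 4) (Fin 4) ℝ) - ζ) * A₂ᵀ)
        + (qc • (bbar • (1 : Matrix (Fin 4) (Fin 4) ℝ) - B₂ * B₂ᵀ)
          + B₂ * (qc • (1 : Matrix (Fin 2) (Fin 2) ℝ) - Q) * B₂ᵀ) := by
    simp only [Matrix.mul_sub, Matrix.sub_mul, mul_smul_comm, smul_mul_assoc, mul_one,
      smul_sub, smul_smul, div_eq_inv_mul, Matrix.mul_one, Matrix.mul_smul, Matrix.smul_mul]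
    module
  have hUB : ((abar / hhat + bbar * qc) • (1 : Matrix (Fin 4) (Fin 4) ℝ)
      - (A₂ * ζ * A₂ᵀ + B₂ * Q * B₂ᵀ)).PosSemidef := by
    rw [key]
    exact ((psd_smul hA1 (inv_nonneg.2 hpos.le)).add hP1).add
      ((psd_smul hB1 hqc_pos.le).add hP2)
  exact inv_ge_of_le hS hc_pos hUB
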